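/- With the data E₀, E₁, π₀, π₁, U, T₀, T₁, N₀, N₁ and V(T₀,T₁) as in the context: every (λ̃, φ̃) ∈ V(T₀,T₁)^⊥ satisfies λ̃(u) = λ̃(0) − π₀(∫₀ᵘ φ̃(s) ds) for all u ∈ [0,1], λ̃(0) ∈ π₀(N₀), and U⁻¹(λ̃(1)) ∈ π₁(N₁). -/

import Mathlib

open MeasureTheory Set

/-- An element of `W(E)`: a pair `(λ, φ)` of continuous maps on `[0,1]` with values in `E`
and in the dual `E* = E →L[ℝ] ℝ` respectively. -/
structure WPair (E : Type*) [NormedAddCommGroup E] [NormedSpace ℝ E] where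
  lam : ℝ → E
  phi : ℝ → E →L[ℝ] ℝ
  lam_cont : ContinuousOn lam (Icc 0 1)
  phi_cont : ContinuousOn phi (Icc 0 1)

/-- The alternating bilinear form `Ω((λ,φ),(λ',φ')) = ∫₀¹ (φ(u)(λ'(u)) − φ'(u)(λ(u))) du`. -/
noncomputable def Omega {E : Type*} [NormedAddCommGroup E] [NormedSpace ℝ E]
    (w w' : WPair E) : ℝ :=
  ∫ u in (0:ℝ)..(1:ℝ), (w.phi u (w'.lam u) - w'.phi u (w.lam u))

/-- The `Ω`-orthogonal of a subset of `W(E)`. -/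
def orth {E : Type*} [NormedAddCommGroup E] [NormedSpace ℝ E] (A : Set (WPair E)) :
    Set (WPair E) :=
  {w | ∀ a ∈ A, Omega a w = 0}

/-- The annihilator `N = { α ∈ E* : α vanishes on T }` of a subspace `T ⊆ E`. -/
def Ann {E : Type*} [NormedAddCommGroup E] [NormedSpace ℝ E] (T : Submodule ℝ E) :
    Set (E →L[ℝ] ℝ) :=
  {α | ∀ v ∈ T, α v = 0}

/-- The space `V(T₀,T₁)` of solutions `(λ,φ)` of `λ(u) = λ(0) − π₀ ∫₀ᵘ φ` with boundary
conditions `λ(0) ∈ T₀` and `U⁻¹(λ(1)) ∈ T₁`. -/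
noncomputable def VSet {E₀ E₁ : Type*}
    [NormedAddCommGroup E₀] [NormedSpace ℝ E₀]
    [NormedAddCommGroup E₁] [NormedSpace ℝ E₁]
    (π₀ : (E₀ →L[ℝ] ℝ) →ₗ[ℝ] E₀) (U : E₁ ≃L[ℝ] E₀)
    (T₀ : Submodule ℝ E₀) (T₁ : Submodule ℝ E₁) : Set (WPair E₀) :=
  {w | (∀ u ∈ Icc (0:ℝ) 1, w.lam u = w.lam 0 - π₀ (∫ s in (0:ℝ)..u, w.phi s)) ∧
       w.lam 0 ∈ T₀ ∧ U.symm (w.lam 1) ∈ T₁}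

section Helpers

set_option linter.unusedSectionVars false

variable {E : Type*} [NormedAddCommGroup E] [NormedSpace ℝ E] [FiniteDimensional ℝ E]

lemma sep_functional (T : Submodule ℝ E) {x : E} (hx : x ∉ T) :
    ∃ α : E →L[ℝ] ℝ, (∀ v ∈ T, α v = 0) ∧ α x ≠ 0 := by
  obtain ⟨f, hfx, hf⟩ := T.exists_dual_map_eq_bot_of_notMem hx inferInstance
  refine ⟨LinearMap.toContinuousLinearMap f, fun v hv => ?_, by simpa using hfx⟩
  have : f v ∈ T.map f := ⟨v, hv, rfl⟩
  rw [hf] at this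
  simpa using this

lemma prim_hasDerivAt {F : Type*} [NormedAddCommGroup F] [NormedSpace ℝ F] [CompleteSpace F]
    {c : ℝ → F} (hc : Continuous c) (u : ℝ) :
    HasDerivAt (fun t => ∫ s in (0:ℝ)..t, c s) (c u) u :=
  intervalIntegral.integral_hasDerivAt_right (hc.intervalIntegrable _ _)
    (hc.aestronglyMeasurable.stronglyMeasurableAtFilter) hc.continuousAt

lemma prim_continuous {F : Type*} [NormedAddCommGroup F] [NormedSpace ℝ F] [CompleteSpace F]
    {c : ℝ → F} (hc : Continuous c) :
    Continuous (fun t => ∫ s in (0:ℝ)..t, c s) :=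
  continuous_iff_continuousAt.2 fun u => (prim_hasDerivAt hc u).continuousAt

noncomputable def annSub (T : Submodule ℝ E) : Submodule ℝ (E →L[ℝ] ℝ) where
  carrier := Ann T
  add_mem' := by intro a b ha hb v hv; simp [Ann] at *; simp [ha v hv, hb v hv]
  zero_mem' := by intro v hv; simp
  smul_mem' := by intro r a ha v hv; simp [Ann] at *; simp [ha v hv]

lemma mem_pi_ann (π : (E →L[ℝ] ℝ) →ₗ[ℝ] E)
    (hskew : ∀ α β : E →L[ℝ] ℝ, α (π β) = - β (π α))
    (T : Submodule ℝ E) {x : E} (hx : ∀ α : E →L[ℝ] ℝ, π α ∈ T → α x = 0) :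
    x ∈ π '' Ann T := by
  by_contra hxP
  have hxP' : x ∉ (annSub T).map π := by
    intro hm
    obtain ⟨γ, hγ, hγx⟩ := hm
    exact hxP ⟨γ, hγ, hγx⟩
  obtain ⟨α, hαP, hαx⟩ := sep_functional _ hxP'
  have hπα : π α ∈ T := by
    by_contra hπα
    obtain ⟨γ, hγT, hγ⟩ := sep_functional T hπα
    have h0 : α (π γ) = 0 := hαP _ ⟨γ, hγT, rfl⟩
    rw [hskew α γ] at h0
    exact hγ (by linarith)
  exact hαx (hx α hπα)

lemma ibp_lemma (p : (E →L[ℝ] ℝ) →L[ℝ] E) {c d : ℝ → E →L[ℝ] ℝ}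
    (hc : Continuous c) (hd : Continuous d) :
    ∫ u in (0:ℝ)..1, ((c u) (p (∫ s in (0:ℝ)..u, d s))
        + (∫ s in (0:ℝ)..u, c s) (p (d u)))
      = (∫ s in (0:ℝ)..1, c s) (p (∫ s in (0:ℝ)..1, d s)) := by
  set C := fun t => ∫ s in (0:ℝ)..t, c s with hCdef
  set D := fun t => ∫ s in (0:ℝ)..t, d s with hDdef
  have hCc : Continuous C := prim_continuous hc
  have hDc : Continuous D := prim_continuous hd
  have hderiv : ∀ u ∈ uIcc (0:ℝ) 1, HasDerivAt (fun t => (C t) (p (D t)))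
      ((c u) (p (D u)) + (C u) (p (d u))) u := by
    intro u _
    have h1 : HasDerivAt C (c u) u := prim_hasDerivAt hc u
    have h2 : HasDerivAt (fun t => p (D t)) (p (d u)) u :=
      (p.hasFDerivAt).comp_hasDerivAt u (prim_hasDerivAt hd u)
    exact h1.clm_apply h2
  have hcont : Continuous fun u => (c u) (p (D u)) + (C u) (p (d u)) := by fun_prop
  have := intervalIntegral.integral_eq_sub_of_hasDerivAt hderiv
    (hcont.intervalIntegrable 0 1)
  rw [this]
  simp [hCdef, hDdef]

lemma sq_int_zero {g : ℝ → ℝ} (hg : Continuous g)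
    (h : ∫ u in (0:ℝ)..1, g u * g u = 0) : ∀ u ∈ Icc (0:ℝ) 1, g u = 0 := by
  have hnn : 0 ≤ fun u => g u * g u := fun u => mul_self_nonneg (g u)
  have hint : Integrable (fun u => g u * g u) (volume.restrict (Ioc (0:ℝ) 1)) :=
    (((hg.mul hg).continuousOn).integrableOn_compact isCompact_Icc).mono_set
      Ioc_subset_Icc_self
  have h0 : ∫ u in Ioc (0:ℝ) 1, g u * g u ∂volume = 0 := by
    rw [← intervalIntegral.integral_of_le (by norm_num : (0:ℝ) ≤ 1)]
    exact h
  have hae : (fun u => g u * g u) =ᵐ[volume.restrict (Ioc (0:ℝ) 1)] 0 :=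
    (MeasureTheory.integral_eq_zero_iff_of_nonneg hnn hint).mp h0
  have hae' : (fun u => g u * g u) =ᵐ[volume.restrict (Icc (0:ℝ) 1)] 0 := by
    rwa [Measure.restrict_congr_set Ioc_ae_eq_Icc] at hae
  have heq : EqOn (fun u => g u * g u) 0 (Icc (0:ℝ) 1) :=
    Measure.eqOn_of_ae_eq hae' (hg.mul hg).continuousOn continuousOn_const
      (by rw [interior_Icc, closure_Ioo (by norm_num : (0:ℝ) ≠ 1)])
  intro u hu
  have := heq hu
  simpa [mul_self_eq_zero] using this

lemma dbr {h : ℝ → ℝ} (hh : Continuous h)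
    (hz : ∀ g : ℝ → ℝ, Continuous g → (∫ s in (0:ℝ)..1, g s) = 0 →
      (∫ u in (0:ℝ)..1, g u * h u) = 0) :
    ∀ u ∈ Icc (0:ℝ) 1, h u = h 0 := by
  set m := ∫ s in (0:ℝ)..1, h s with hm
  set g := fun u => h u - m with hgdef
  have hgc : Continuous g := hh.sub continuous_const
  have hg0 : ∫ s in (0:ℝ)..1, g s = 0 := by
    rw [hgdef]
    rw [intervalIntegral.integral_sub (hh.intervalIntegrable 0 1)
      (intervalIntegrable_const)]
    simp [hm]
  have h1 : ∫ u in (0:ℝ)..1, g u * h u = 0 := hz g hgc hg0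
  have h2 : ∫ u in (0:ℝ)..1, g u * g u = 0 := by
    have heq : ∀ u, g u * g u = g u * h u - g u * m := by
      intro u; simp only [hgdef]; ring
    rw [intervalIntegral.integral_congr (g := fun u => g u * h u - g u * m)
      (fun u _ => heq u)]
    rw [intervalIntegral.integral_sub (f := fun u => g u * h u) (g := fun u => g u * m)
      ((hgc.mul hh).intervalIntegrable 0 1)
      ((hgc.mul continuous_const).intervalIntegrable 0 1), h1,
      intervalIntegral.integral_mul_const, hg0]
    ring
  have hzero := sq_int_zero hgc h2
  intro u hu
  have h3 := hzero u hu
  have h4 := hzero 0 (by norm_num)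
  simp only [hgdef] at h3 h4
  linarith

end Helpers

theorem orth_VSet_subset_explicit
    (E₀ E₁ : Type*)
    [NormedAddCommGroup E₀] [NormedSpace ℝ E₀] [FiniteDimensional ℝ E₀]
    [NormedAddCommGroup E₁] [NormedSpace ℝ E₁] [FiniteDimensional ℝ E₁]
    (π₀ : (E₀ →L[ℝ] ℝ) →ₗ[ℝ] E₀) (π₁ : (E₁ →L[ℝ] ℝ) →ₗ[ℝ] E₁)
    (hskew₀ : ∀ α β : E₀ →L[ℝ] ℝ, α (π₀ β) = - β (π₀ α))
    (hskew₁ : ∀ α β : E₁ →L[ℝ] ℝ, α (π₁ β) = - β (π₁ α))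
    (U : E₁ ≃L[ℝ] E₀)
    (hU : ∀ α : E₀ →L[ℝ] ℝ, U (π₁ (α.comp (U : E₁ →L[ℝ] E₀))) = π₀ α)
    (T₀ : Submodule ℝ E₀) (T₁ : Submodule ℝ E₁)
    (w : WPair E₀) (hw : w ∈ orth (VSet π₀ U T₀ T₁)) :
    (∀ u ∈ Icc (0:ℝ) 1, w.lam u = w.lam 0 - π₀ (∫ s in (0:ℝ)..u, w.phi s)) ∧
      w.lam 0 ∈ π₀ '' Ann T₀ ∧ U.symm (w.lam 1) ∈ π₁ '' Ann T₁ := by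
  classical
  -- continuous extensions of `w.lam` and `w.phi` to all of `ℝ`
  set Λ : ℝ → E₀ := fun u => w.lam ((projIcc (0:ℝ) 1 zero_le_one u : Icc (0:ℝ) 1) : ℝ)
    with hΛdef
  set ψ : ℝ → E₀ →L[ℝ] ℝ :=
    fun u => w.phi ((projIcc (0:ℝ) 1 zero_le_one u : Icc (0:ℝ) 1) : ℝ) with hψdef
  have hproj : ∀ u : ℝ, ((projIcc (0:ℝ) 1 zero_le_one u : Icc (0:ℝ) 1) : ℝ) ∈ Icc (0:ℝ) 1 :=
    fun u => (projIcc (0:ℝ) 1 zero_le_one u).2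
  have hΛc : Continuous Λ :=
    w.lam_cont.comp_continuous (continuous_subtype_val.comp (continuous_projIcc)) hproj
  have hψc : Continuous ψ :=
    w.phi_cont.comp_continuous (continuous_subtype_val.comp (continuous_projIcc)) hproj
  have hΛeq : ∀ u ∈ Icc (0:ℝ) 1, Λ u = w.lam u := by
    intro u hu; simp [hΛdef, projIcc_of_mem zero_le_one hu]
  have hψeq : ∀ u ∈ Icc (0:ℝ) 1, ψ u = w.phi u := by
    intro u hu; simp [hψdef, projIcc_of_mem zero_le_one hu]
  set p : (E₀ →L[ℝ] ℝ) →L[ℝ] E₀ := LinearMap.toContinuousLinearMap π₀ with hpdef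
  have hp : ∀ α, p α = π₀ α := fun α => rfl
  set G : ℝ → E₀ →L[ℝ] ℝ := fun u => ∫ s in (0:ℝ)..u, ψ s with hGdef
  have hGc : Continuous G := prim_continuous hψc
  -- interval integrals of `w.phi` over subintervals of `[0,1]` coincide with those of `ψ`
  have hGint : ∀ u ∈ Icc (0:ℝ) 1, (∫ s in (0:ℝ)..u, w.phi s) = G u := by
    intro u hu
    exact intervalIntegral.integral_congr fun s hs => by
      rw [uIcc_of_le hu.1] at hs
      exact (hψeq s ⟨hs.1, le_trans hs.2 hu.2⟩).symm
  -- the key consequence of orthogonality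
  have key : ∀ (v : E₀) (c : ℝ → E₀ →L[ℝ] ℝ), Continuous c → v ∈ T₀ →
      U.symm (v - π₀ (∫ s in (0:ℝ)..1, c s)) ∈ T₁ →
      (∫ u in (0:ℝ)..1,
        ((c u) (Λ u) - (ψ u) (v - p (∫ s in (0:ℝ)..u, c s)))) = 0 := by
    intro v c hc hv hb
    set a : WPair E₀ :=
      ⟨fun u => v - p (∫ s in (0:ℝ)..u, c s), c,
        ((continuous_const.sub (p.continuous.comp (prim_continuous hc))).continuousOn),
        hc.continuousOn⟩ with hadef
    have ha : a ∈ VSet π₀ U T₀ T₁ := by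
      refine ⟨fun u hu => ?_, ?_, ?_⟩
      · show v - p (∫ s in (0:ℝ)..u, c s)
          = (v - p (∫ s in (0:ℝ)..0, c s)) - π₀ (∫ s in (0:ℝ)..u, c s)
        rw [intervalIntegral.integral_same]
        simp [hp]
      · show v - p (∫ s in (0:ℝ)..0, c s) ∈ T₀
        rw [intervalIntegral.integral_same]
        simpa using hv
      · show U.symm (v - p (∫ s in (0:ℝ)..1, c s)) ∈ T₁
        rw [hp]; exact hb
    calc (∫ u in (0:ℝ)..1,
            ((c u) (Λ u) - (ψ u) (v - p (∫ s in (0:ℝ)..u, c s))))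
        = ∫ u in (0:ℝ)..1, (a.phi u (w.lam u) - w.phi u (a.lam u)) := by
          refine intervalIntegral.integral_congr fun u hu => ?_
          rw [uIcc_of_le (by norm_num : (0:ℝ) ≤ 1)] at hu
          show c u (Λ u) - ψ u _ = c u (w.lam u) - w.phi u _
          rw [hΛeq u hu, hψeq u hu]
      _ = 0 := hw a ha
  have hG0 : G 0 = 0 := intervalIntegral.integral_same
  -- Step 1: the differential equation for `w`
  have hcomb : ∀ α : E₀ →L[ℝ] ℝ, ∀ u ∈ Icc (0:ℝ) 1,
      α (Λ u + p (G u)) = α (Λ 0 + p (G 0)) := by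
    intro α
    have hh : Continuous fun u => α (Λ u + p (G u)) := by fun_prop
    refine dbr hh ?_
    intro g hgc hg0
    set c : ℝ → E₀ →L[ℝ] ℝ := fun u => g u • α with hcdef
    have hcc : Continuous c := hgc.smul continuous_const
    have hCc : Continuous fun t => ∫ s in (0:ℝ)..t, c s := prim_continuous hcc
    have hCt : ∀ t : ℝ, (∫ s in (0:ℝ)..t, c s) = (∫ s in (0:ℝ)..t, g s) • α :=
      fun t => intervalIntegral.integral_smul_const g α
    have hb : U.symm ((0:E₀) - π₀ (∫ s in (0:ℝ)..1, c s)) ∈ T₁ := by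
      rw [hCt, hg0, zero_smul]
      simp
    have hk := key 0 c hcc T₀.zero_mem hb
    have e1 : (∫ u in (0:ℝ)..1, ((c u) (Λ u) - (ψ u) ((0:E₀) - p (∫ s in (0:ℝ)..u, c s))))
        = (∫ u in (0:ℝ)..1, (c u) (Λ u))
          - (∫ u in (0:ℝ)..1, (∫ s in (0:ℝ)..u, c s) (p (ψ u))) := by
      rw [← intervalIntegral.integral_sub
        ((by fun_prop : Continuous fun u => (c u) (Λ u)).intervalIntegrable 0 1)
        ((by fun_prop :
          Continuous fun u => (∫ s in (0:ℝ)..u, c s) (p (ψ u))).intervalIntegrable 0 1)]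
      refine intervalIntegral.integral_congr fun u _ => ?_
      have hsk := hskew₀ (ψ u) (∫ s in (0:ℝ)..u, c s)
      simp only [zero_sub, map_neg, hp] at hsk ⊢
      rw [hsk]
      ring
    rw [e1] at hk
    have hibp := ibp_lemma p hcc hψc
    rw [hCt 1, hg0, zero_smul] at hibp
    simp only [ContinuousLinearMap.zero_apply] at hibp
    rw [intervalIntegral.integral_add
        ((by fun_prop : Continuous fun u => (c u) (p (G u))).intervalIntegrable 0 1)
        ((by fun_prop :
          Continuous fun u => (∫ s in (0:ℝ)..u, c s) (p (ψ u))).intervalIntegrable 0 1)]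
      at hibp
    have e2 : (∫ u in (0:ℝ)..1, g u * α (Λ u + p (G u)))
        = (∫ u in (0:ℝ)..1, (c u) (Λ u)) + (∫ u in (0:ℝ)..1, (c u) (p (G u))) := by
      rw [← intervalIntegral.integral_add
        ((by fun_prop : Continuous fun u => (c u) (Λ u)).intervalIntegrable 0 1)
        ((by fun_prop : Continuous fun u => (c u) (p (G u))).intervalIntegrable 0 1)]
      refine intervalIntegral.integral_congr fun u _ => ?_
      simp only [hcdef, ContinuousLinearMap.smul_apply, map_add, smul_eq_mul]
      ring
    rw [e2]
    linarith
  have step1 : ∀ u ∈ Icc (0:ℝ) 1, Λ u + p (G u) = Λ 0 := by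
    intro u hu
    by_contra hne
    have hne' : Λ u + p (G u) ≠ Λ 0 + p (G 0) := by
      rw [hG0, map_zero, add_zero]; exact hne
    obtain ⟨f, hf⟩ := SeparatingDual.exists_separating_of_ne (R := ℝ) hne'
    exact hf (hcomb f u hu)
  have concl1 : ∀ u ∈ Icc (0:ℝ) 1,
      w.lam u = w.lam 0 - π₀ (∫ s in (0:ℝ)..u, w.phi s) := by
    intro u hu
    have h1 := step1 u hu
    rw [hΛeq u hu, hΛeq 0 (left_mem_Icc.2 zero_le_one)] at h1
    rw [hGint u hu, ← hp]
    exact eq_sub_of_add_eq h1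
  have hlam1 : w.lam 1 = Λ 0 - p (G 1) := by
    have h1 := concl1 1 (right_mem_Icc.2 zero_le_one)
    rw [hGint 1 (right_mem_Icc.2 zero_le_one), ← hp,
      ← hΛeq 0 (left_mem_Icc.2 zero_le_one)] at h1
    exact h1
  -- Step 2: the key boundary identity
  have key2 : ∀ (α : E₀ →L[ℝ] ℝ) (v : E₀), v ∈ T₀ → U.symm (v - π₀ α) ∈ T₁ →
      α (w.lam 1) - (G 1) v = 0 := by
    intro α v hv hb
    have hcc : Continuous (fun _ : ℝ => α) := continuous_const
    have hCt : ∀ t : ℝ, (∫ s in (0:ℝ)..t, (fun _ : ℝ => α) s) = t • α := by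
      intro t; simp
    have hb' : U.symm (v - π₀ (∫ s in (0:ℝ)..1, (fun _ : ℝ => α) s)) ∈ T₁ := by
      rw [hCt 1, one_smul]; exact hb
    have hk := key v _ hcc hv hb'
    -- split the integral in hk
    have e1 : (∫ u in (0:ℝ)..1,
          ((α : E₀ →L[ℝ] ℝ) (Λ u) - (ψ u) (v - p (∫ s in (0:ℝ)..u, (fun _ : ℝ => α) s))))
        = (∫ u in (0:ℝ)..1, α (Λ u)) - (∫ u in (0:ℝ)..1, (ψ u) v)
          - (∫ u in (0:ℝ)..1, (∫ s in (0:ℝ)..u, (fun _ : ℝ => α) s) (p (ψ u))) := by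
      rw [← intervalIntegral.integral_sub
        ((by fun_prop : Continuous fun u => α (Λ u)).intervalIntegrable 0 1)
        ((by fun_prop : Continuous fun u => (ψ u) v).intervalIntegrable 0 1),
        ← intervalIntegral.integral_sub
        ((by fun_prop : Continuous fun u => α (Λ u) - (ψ u) v).intervalIntegrable 0 1)
        ((by fun_prop : Continuous fun u =>
          (∫ s in (0:ℝ)..u, (fun _ : ℝ => α) s) (p (ψ u))).intervalIntegrable 0 1)]
      refine intervalIntegral.integral_congr fun u _ => ?_
      have hsk := hskew₀ (ψ u) (∫ s in (0:ℝ)..u, (fun _ : ℝ => α) s)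
      simp only [hp] at hsk ⊢
      rw [map_sub (ψ u), hsk]
      ring
    rw [e1] at hk
    have hψv : (∫ u in (0:ℝ)..1, (ψ u) v) = (G 1) v :=
      (ContinuousLinearMap.intervalIntegral_apply (hψc.intervalIntegrable 0 1) v).symm
    have hibp := ibp_lemma p hcc hψc
    rw [hCt 1, one_smul] at hibp
    rw [intervalIntegral.integral_add
        ((by fun_prop : Continuous fun u => α (p (G u))).intervalIntegrable 0 1)
        ((by fun_prop : Continuous fun u =>
          (∫ s in (0:ℝ)..u, (fun _ : ℝ => α) s) (p (ψ u))).intervalIntegrable 0 1)]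
      at hibp
    have eΛ : (∫ u in (0:ℝ)..1, α (Λ u))
        = α (Λ 0) - (∫ u in (0:ℝ)..1, α (p (G u))) := by
      have : (∫ u in (0:ℝ)..1, α (Λ u))
          = ∫ u in (0:ℝ)..1, (α (Λ 0) - α (p (G u))) := by
        refine intervalIntegral.integral_congr fun u hu => ?_
        rw [uIcc_of_le (by norm_num : (0:ℝ) ≤ 1)] at hu
        rw [← step1 u hu, map_add]
        ring
      rw [this, intervalIntegral.integral_sub
        (intervalIntegrable_const)
        ((by fun_prop : Continuous fun u => α (p (G u))).intervalIntegrable 0 1)]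
      simp
    have hibp' : (∫ x in (0:ℝ)..1, α (p (G x)))
        + (∫ x in (0:ℝ)..1, (∫ s in (0:ℝ)..x, (fun _ : ℝ => α) s) (p (ψ x)))
        = α (p (G 1)) := hibp
    rw [eΛ, hψv] at hk
    rw [hlam1, map_sub]
    linarith
  refine ⟨concl1, ?_, ?_⟩
  · -- w.lam 0 ∈ π₀ '' Ann T₀
    apply mem_pi_ann π₀ hskew₀
    intro α hπα
    have hb : U.symm (π₀ α - π₀ α) ∈ T₁ := by simp
    have hk2 := key2 α (π₀ α) hπα hb
    have hsk : (G 1) (π₀ α) = - α (π₀ (G 1)) := hskew₀ (G 1) α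
    rw [hlam1, map_sub, hsk, hp] at hk2
    have hΛ0 : Λ 0 = w.lam 0 := hΛeq 0 (left_mem_Icc.2 zero_le_one)
    rw [hΛ0] at hk2
    linarith
  · -- U.symm (w.lam 1) ∈ π₁ '' Ann T₁
    apply mem_pi_ann π₁ hskew₁
    intro β hπβ
    set α : E₀ →L[ℝ] ℝ := β.comp (U.symm : E₀ →L[ℝ] E₁) with hαdef
    have hcompU : α.comp (U : E₁ →L[ℝ] E₀) = β := by
      ext x; simp [hαdef]
    have hπ₀α : π₀ α = U (π₁ β) := by rw [← hU α, hcompU]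
    have hb : U.symm ((0:E₀) - π₀ α) ∈ T₁ := by
      rw [hπ₀α, zero_sub, map_neg, ContinuousLinearEquiv.symm_apply_apply]
      exact T₁.neg_mem hπβ
    have hk2 := key2 α 0 T₀.zero_mem hb
    rw [map_zero, sub_zero] at hk2
    simpa [hαdef] using hk2
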